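/- Let f : G → H : C be a quasi-homomorphism into a locally compact group H with compact normal symmetric error set C, such that cl(f[X]) is compact, where X ⊆ G is symmetric with e ∈ X. Then for every neighborhood U of the identity in H, finitely many left translates of f⁻¹[UC] cover X. -/

import Mathlib

open Pointwise

theorem stmt3 {G H : Type*} [Group G] [Group H] [TopologicalSpace H] [IsTopologicalGroup H]
    [LocallyCompactSpace H] [T2Space H]
    (C : Set H) (hCc : IsCompact C) (hCs : C⁻¹ = C)
    (hCn : ∀ c ∈ C, ∀ h : H, h * c * h⁻¹ ∈ C)
    (X : Set G) (hXs : X⁻¹ = X) (hX1 : (1 : G) ∈ X)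
    (hgen : Subgroup.closure X = ⊤)
    (f : G → H)
    (hfr : ∀ x y : G, (f y)⁻¹ * (f x)⁻¹ * f (x * y) ∈ C)
    (hfl : ∀ x y : G, f (x * y) * (f y)⁻¹ * (f x)⁻¹ ∈ C)
    (hfX : IsCompact (closure (f '' X))) :
    ∀ U ∈ nhds (1 : H), ∃ F : Finset G, X ⊆ ↑F * f ⁻¹' (U * C) := by
  intro U hU
  obtain ⟨V, hVU, hVo, hV1⟩ := mem_nhds_iff.mp hU
  set W : Set H := V ∩ V⁻¹ with hWdef
  have hWo : IsOpen W := hVo.inter hVo.inv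
  have hW1 : (1 : H) ∈ W := ⟨hV1, by simpa using hV1⟩
  have hWsub : W ⊆ V := Set.inter_subset_left
  have hWsymm : ∀ w ∈ W, w⁻¹ ∈ W := by
    rintro w ⟨h1, h2⟩
    exact ⟨by simpa using h2, by simpa using h1⟩
  -- cover the compact set by translates
  have hcover : closure (f '' X) ⊆ ⋃ y : X, (f y) • W := by
    intro k hk
    have hkW : k ∈ k • W := ⟨1, hW1, mul_one k⟩
    have hne : ((k • W) ∩ f '' X).Nonempty :=
      mem_closure_iff.mp hk _ (hWo.smul k) hkW
    obtain ⟨h, ⟨w, hw, hwe⟩, ⟨y, hy, hfy⟩⟩ := hne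
    refine Set.mem_iUnion.mpr ⟨⟨y, hy⟩, ?_⟩
    refine ⟨w⁻¹, hWsymm w hw, ?_⟩
    have : f y = k * w := by rw [hfy, ← hwe]; rfl
    simp [this, smul_eq_mul, mul_assoc]
  obtain ⟨t, ht⟩ := hfX.elim_finite_subcover (fun y : X => (f y) • W)
    (fun y => hWo.smul _) hcover
  classical
  refine ⟨t.image (fun y : X => (y : G)), ?_⟩
  intro x hx
  have hfx : f x ∈ closure (f '' X) := subset_closure ⟨x, hx, rfl⟩
  obtain ⟨y, hyt, w, hw, hwe⟩ := Set.mem_iUnion₂.mp (ht hfx)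
  have hwval : w = (f (y : G))⁻¹ * f x := by
    have : (f (y : G)) * w = f x := hwe
    rw [← this]; group
  -- the quasi-homomorphism estimate
  have hc := hfr (y : G) ((y : G)⁻¹ * x)
  rw [mul_inv_cancel_left] at hc
  have hkey : f ((y : G)⁻¹ * x) =
      ((f (y : G))⁻¹ * f x) * ((f ((y : G)⁻¹ * x))⁻¹ * (f (y : G))⁻¹ * f x)⁻¹ := by
    group
  have hcinv : ((f ((y : G)⁻¹ * x))⁻¹ * (f (y : G))⁻¹ * f x)⁻¹ ∈ C := by
    rw [← hCs]; exact Set.inv_mem_inv.mpr hc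
  have hmem : f ((y : G)⁻¹ * x) ∈ U * C := by
    rw [hkey]
    exact Set.mul_mem_mul (hVU (hWsub (hwval ▸ hw))) hcinv
  exact ⟨(y : G), Finset.mem_coe.mpr (Finset.mem_image_of_mem _ hyt),
    (y : G)⁻¹ * x, hmem, by group⟩
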